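/- Suppose k is a local field. Then any two norms on the underlying k-algebra of C_bd(X,k) each making it a non-Archimedean Banach k-algebra are equivalent; in particular, every such complete algebra norm is equivalent to the supremum norm. -/

import Mathlib

/-- `k` is a finite field equipped with the trivial absolute value. -/
def IsTriviallyValuedFiniteField (k : Type*) [NormedField k] : Prop :=
  Finite k ∧ ∀ a : k, a ≠ 0 → ‖a‖ = 1

/-- `k` is a nonarchimedean local field: together with an ambient completeness assumption,
this says that `k` is a complete discretely valued field (the value group of `k` is generated
by the norm of a uniformizer `π`) whose residue field is finite (the unit ball is covered by
finitely many open unit balls). -/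
def IsNALocalField (k : Type*) [NormedField k] : Prop :=
  (∃ π : k, 0 < ‖π‖ ∧ ‖π‖ < 1 ∧ ∀ a : k, a ≠ 0 → ∃ n : ℤ, ‖a‖ = ‖π‖ ^ n) ∧
  (∃ S : Finset k, ∀ a : k, ‖a‖ ≤ 1 → ∃ s ∈ S, ‖a - s‖ < 1)

/-- A norm on the `k`-algebra `A` making it a non-Archimedean Banach `k`-algebra: a complete
norm `N` with `N (x+y) ≤ max (N x) (N y)`, `N (x*y) ≤ N x * N y`, `N (a • x) = ‖a‖ * N x`
and `N 1 = 1`. Completeness is expressed by the convergence of Cauchy sequences. -/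
structure NABanachAlgebraNorm (k : Type*) [NormedField k]
    (A : Type*) [Ring A] [Algebra k A] where
  toFun : A → ℝ
  nonneg : ∀ x, 0 ≤ toFun x
  eq_zero_iff : ∀ x, toFun x = 0 ↔ x = 0
  add_le : ∀ x y, toFun (x + y) ≤ max (toFun x) (toFun y)
  mul_le : ∀ x y, toFun (x * y) ≤ toFun x * toFun y
  smul_eq : ∀ (a : k) (x : A), toFun (a • x) = ‖a‖ * toFun x
  one_eq : toFun 1 = 1
  complete : ∀ u : ℕ → A,
    (∀ ε : ℝ, 0 < ε → ∃ N : ℕ, ∀ i ≥ N, ∀ j ≥ N, toFun (u i - u j) < ε) →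
    ∃ x : A, ∀ ε : ℝ, 0 < ε → ∃ N : ℕ, ∀ i ≥ N, toFun (u i - x) < ε

namespace NABanachAlgebraNorm

variable {k : Type*} [NormedField k] {A : Type*} [Ring A] [Algebra k A]
  (N : NABanachAlgebraNorm k A)

theorem map_zero' : N.toFun 0 = 0 := (N.eq_zero_iff 0).mpr rfl

theorem map_neg' (x : A) : N.toFun (-x) = N.toFun x := by
  have h : (-1 : k) • x = -x := neg_one_smul k x
  rw [← h, N.smul_eq]
  simp

theorem pow_le' (x : A) : ∀ n : ℕ, N.toFun (x ^ n) ≤ N.toFun x ^ n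
  | 0 => by simp [N.one_eq]
  | n + 1 => by
      rw [pow_succ, pow_succ]
      calc N.toFun (x ^ n * x) ≤ N.toFun (x ^ n) * N.toFun x := N.mul_le _ _
        _ ≤ N.toFun x ^ n * N.toFun x :=
          mul_le_mul_of_nonneg_right (pow_le' x n) (N.nonneg x)

end NABanachAlgebraNorm

section Inverse

variable {k : Type*} [NormedField k] {A : Type*} [CommRing A] [Algebra k A]

/-- In a complete nonarchimedean algebra, `1 - u` is invertible when `N u < 1`. -/
theorem NABanachAlgebraNorm.exists_inv_one_sub (N : NABanachAlgebraNorm k A) {u : A}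
    (hu : N.toFun u < 1) : ∃ v, (1 - u) * v = 1 := by
  set r := N.toFun u with hr
  have r0 : 0 ≤ r := N.nonneg u
  set s : ℕ → A := fun n => ∑ i ∈ Finset.range n, u ^ i with hs
  have hpow : ∀ n, N.toFun (u ^ n) ≤ r ^ n := fun n => N.pow_le' u n
  have key : ∀ i j : ℕ, i ≤ j → N.toFun (s j - s i) ≤ r ^ i := by
    intro i j hij
    induction j, hij using Nat.le_induction with
    | base => simp [N.map_zero']; positivity
    | succ j hij ih =>
        have hstep : s (j + 1) - s i = (s j - s i) + u ^ j := by
          simp only [hs, Finset.sum_range_succ]; ring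
        rw [hstep]
        refine le_trans (N.add_le _ _) (max_le ih ?_)
        exact le_trans (hpow j) (pow_le_pow_of_le_one r0 hu.le hij)
  have cauchy : ∀ ε : ℝ, 0 < ε → ∃ M : ℕ, ∀ i ≥ M, ∀ j ≥ M, N.toFun (s i - s j) < ε := by
    intro ε hε
    obtain ⟨n, hn⟩ := exists_pow_lt_of_lt_one hε hu
    refine ⟨n, fun i hi j hj => ?_⟩
    rcases le_total i j with h | h
    · rw [← neg_sub (s j) (s i), N.map_neg']
      exact lt_of_le_of_lt (le_trans (key i j h) (pow_le_pow_of_le_one r0 hu.le hi)) hn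
    · exact lt_of_le_of_lt (le_trans (key j i h) (pow_le_pow_of_le_one r0 hu.le hj)) hn
  obtain ⟨v, hv⟩ := N.complete s cauchy
  refine ⟨v, ?_⟩
  have hw : ∀ ε : ℝ, 0 < ε → N.toFun ((1 - u) * v - 1) < ε := by
    intro ε hε
    obtain ⟨n₁, hn₁⟩ := hv ε hε
    obtain ⟨n₂, hn₂⟩ := exists_pow_lt_of_lt_one hε hu
    set n := max n₁ n₂ with hn
    have h1 : N.toFun (s n - v) < ε := hn₁ n (le_max_left _ _)
    have hgeom : (1 - u) * s n = 1 - u ^ n := by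
      have hg := geom_sum_mul u n
      simp only [hs]
      linear_combination -hg
    have decomp : (1 - u) * v - 1 = (1 - u) * (v - s n) + -(u ^ n) := by
      rw [mul_sub, hgeom]; ring
    rw [decomp]
    refine lt_of_le_of_lt (N.add_le _ _) (max_lt ?_ ?_)
    · have h1u : N.toFun (1 - u) ≤ 1 := by
        rw [sub_eq_add_neg]
        refine le_trans (N.add_le 1 (-u)) (max_le (le_of_eq N.one_eq) ?_)
        rw [N.map_neg']; exact hu.le
      calc N.toFun ((1 - u) * (v - s n)) ≤ N.toFun (1 - u) * N.toFun (v - s n) := N.mul_le _ _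
        _ ≤ 1 * N.toFun (v - s n) := mul_le_mul_of_nonneg_right h1u (N.nonneg _)
        _ = N.toFun (s n - v) := by rw [one_mul, ← neg_sub (s n) v, N.map_neg']
        _ < ε := h1
    · rw [N.map_neg']
      exact lt_of_le_of_lt
        (le_trans (hpow n) (pow_le_pow_of_le_one r0 hu.le (le_max_right n₁ n₂))) hn₂
  have hzero : N.toFun ((1 - u) * v - 1) = 0 := by
    by_contra h
    have hpos : 0 < N.toFun ((1 - u) * v - 1) :=
      lt_of_le_of_ne (N.nonneg _) (Ne.symm h)
    exact absurd (hw _ hpos) (lt_irrefl _)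
  have := (N.eq_zero_iff _).mp hzero
  exact sub_eq_zero.mp this

end Inverse

section Space

variable {k : Type*} [NormedField k] {A : Type*} [Ring A] [Algebra k A]

/-- Type synonym carrying the norm `N`. -/
def NASp (_N : NABanachAlgebraNorm k A) : Type _ := A

variable (N : NABanachAlgebraNorm k A)

instance : AddCommGroup (NASp N) := inferInstanceAs (AddCommGroup A)
instance : Module k (NASp N) := inferInstanceAs (Module k A)

noncomputable instance : NormedAddCommGroup (NASp N) :=
  AddGroupNorm.toNormedAddCommGroup
    { toFun := fun x => N.toFun (show A from x)
      map_zero' := N.map_zero'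
      add_le' := fun x y => le_trans (N.add_le x y)
        (max_le (le_add_of_nonneg_right (N.nonneg y)) (le_add_of_nonneg_left (N.nonneg x)))
      neg' := fun x => N.map_neg' x
      eq_zero_of_map_eq_zero' := fun x h => (N.eq_zero_iff x).mp h }

theorem NASp.norm_def (x : NASp N) : ‖x‖ = N.toFun (show A from x) := rfl

noncomputable instance : NormedSpace k (NASp N) where
  norm_smul_le a x := le_of_eq (N.smul_eq a x)

instance : CompleteSpace (NASp N) := by
  apply Metric.complete_of_cauchySeq_tendsto
  intro u hu
  have hcau : ∀ ε : ℝ, 0 < ε → ∃ M : ℕ, ∀ i ≥ M, ∀ j ≥ M,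
      N.toFun ((u i : A) - u j) < ε := by
    intro ε hε
    obtain ⟨M, hM⟩ := Metric.cauchySeq_iff.mp hu ε hε
    exact ⟨M, fun i hi j hj => by
      have := hM i hi j hj
      rwa [dist_eq_norm] at this⟩
  obtain ⟨x, hx⟩ := N.complete (fun n => (u n : A)) hcau
  refine ⟨x, Metric.tendsto_atTop.mpr fun ε hε => ?_⟩
  obtain ⟨M, hM⟩ := hx ε hε
  exact ⟨M, fun n hn => (dist_eq_norm (u n) (x : NASp N)).trans_lt (hM n hn)⟩

/-- The identity as a linear equivalence between the synonym and the original space. -/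
def NASp.equiv : NASp N ≃ₗ[k] A where
  toFun x := x
  invFun x := x
  map_add' _ _ := rfl
  map_smul' _ _ := rfl
  left_inv _ := rfl
  right_inv _ := rfl

end Space

section SupNorm

variable {X : Type*} [TopologicalSpace X] {k : Type*} [NormedField k]

/-- Any complete nonarchimedean algebra norm dominates the sup norm (spectral argument). -/
theorem NABanachAlgebraNorm.norm_le_toFun
    (N : NABanachAlgebraNorm k (BoundedContinuousFunction X k))
    (f : BoundedContinuousFunction X k) : ‖f‖ ≤ N.toFun f := by
  refine (BoundedContinuousFunction.norm_le (N.nonneg f)).mpr fun x => ?_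
  by_contra hlt
  push_neg at hlt
  have hlampos : 0 < ‖f x‖ := lt_of_le_of_lt (N.nonneg f) hlt
  have hlam : f x ≠ 0 := norm_pos_iff.mp hlampos
  set u : BoundedContinuousFunction X k := (f x)⁻¹ • f with hu
  have hNu : N.toFun u < 1 := by
    rw [hu, N.smul_eq, norm_inv, ← div_eq_inv_mul]
    exact (div_lt_one hlampos).mpr hlt
  obtain ⟨v, hv⟩ := N.exists_inv_one_sub hNu
  have := congrArg (fun g : BoundedContinuousFunction X k => g x) hv
  simp only [hu, BoundedContinuousFunction.coe_mul, Pi.mul_apply,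
    BoundedContinuousFunction.coe_sub, Pi.sub_apply, BoundedContinuousFunction.coe_one,
    Pi.one_apply, BoundedContinuousFunction.coe_smul, Pi.smul_apply, smul_eq_mul] at this
  rw [inv_mul_cancel₀ hlam, sub_self, zero_mul] at this
  exact zero_ne_one this

/-- The Banach open mapping theorem gives the reverse bound. -/
theorem NABanachAlgebraNorm.toFun_le_const {k : Type*} [NontriviallyNormedField k]
    [CompleteSpace k]
    (N : NABanachAlgebraNorm k (BoundedContinuousFunction X k)) :
    ∃ C : ℝ, 0 < C ∧ ∀ f : BoundedContinuousFunction X k, N.toFun f ≤ C * ‖f‖ := by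
  set e := NASp.equiv N
  have hcont : Continuous e :=
    AddMonoidHomClass.continuous_of_bound (e : NASp N →ₗ[k] BoundedContinuousFunction X k) 1
      (fun x => by rw [one_mul]; exact N.norm_le_toFun x)
  obtain ⟨C, hC, hbound⟩ := (e.toContinuousLinearEquivOfContinuous hcont).symm
    |>.toContinuousLinearMap.bound
  exact ⟨C, hC, fun f => hbound f⟩

end SupNorm

/-- If `k` is a local field, then any two norms on the underlying
`k`-algebra of `C_bd(X,k)` making it a non-Archimedean Banach `k`-algebra are equivalent;
in particular, every such complete algebra norm is equivalent to the supremum norm. -/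
theorem complete_algebra_norms_equivalent {X : Type*} [TopologicalSpace X]
    (k : Type*) [NormedField k] [CompleteSpace k] [IsUltrametricDist k]
    (hk : IsNALocalField k)
    (N₁ N₂ : NABanachAlgebraNorm k (BoundedContinuousFunction X k)) :
    (∃ c C : ℝ, 0 < c ∧ 0 < C ∧ ∀ f : BoundedContinuousFunction X k,
      c * N₁.toFun f ≤ N₂.toFun f ∧ N₂.toFun f ≤ C * N₁.toFun f) ∧
    (∃ c C : ℝ, 0 < c ∧ 0 < C ∧ ∀ f : BoundedContinuousFunction X k,
      c * ‖f‖ ≤ N₁.toFun f ∧ N₁.toFun f ≤ C * ‖f‖) := by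
  obtain ⟨⟨π, hπ0, hπ1, -⟩, -⟩ := hk
  letI : NontriviallyNormedField k :=
    { ‹NormedField k› with
      non_trivial := ⟨π⁻¹, by rw [norm_inv]; exact (one_lt_inv₀ hπ0).mpr hπ1⟩ }
  obtain ⟨C₁, hC₁, hb₁⟩ := N₁.toFun_le_const
  obtain ⟨C₂, hC₂, hb₂⟩ := N₂.toFun_le_const
  constructor
  · refine ⟨C₁⁻¹, C₂, inv_pos.mpr hC₁, hC₂, fun f => ⟨?_, ?_⟩⟩
    · rw [inv_mul_le_iff₀ hC₁]
      exact le_trans (hb₁ f) (by gcongr; exact N₂.norm_le_toFun f)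
    · exact le_trans (hb₂ f) (by gcongr; exact N₁.norm_le_toFun f)
  · exact ⟨1, C₁, one_pos, hC₁, fun f => ⟨by rw [one_mul]; exact N₁.norm_le_toFun f, hb₁ f⟩⟩
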